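/- arXiv:0905.3998 — 13 statements merged into one kernel-verified Lean document; each statement's English description precedes it below -/
import Mathlib

section
/- Let A and B be interfaces and r ⊆ |A| × |B|. Then (a,b) ∈ (P_A ⊸ P_B)(r) if and only if for every x ⊆ |A|, a ∈ P_A(x) implies b ∈ P_B(⟨r⟩ x), where ⟨r⟩ x is the direct image of x along r. -/
/-- A (monotone) predicate transformer on a set together with its state space:
an *interface*. -/
structure Interface (α : Type*) where
  P : Set α → Set α
  mono : Monotone P

/-- A seed of an interface: a subset `x` with `x ⊆ P x`. -/
def Seed {α : Type*} (X : Interface α) (x : Set α) : Prop := x ⊆ X.P x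

/-- Direct image of a set along a relation. -/
def dimage {α β : Type*} (r : Set (α × β)) (x : Set α) : Set β :=
  {b | ∃ a ∈ x, (a, b) ∈ r}

/-- The dual interface: `P⊥ x = (P xᶜ)ᶜ`. -/
def Interface.dual {α : Type*} (X : Interface α) : Interface α where
  P x := (X.P xᶜ)ᶜ
  mono := fun x y hxy =>
    Set.compl_subset_compl.mpr (X.mono (Set.compl_subset_compl.mpr hxy))

/-- The tensor of two interfaces. -/
def Interface.tensor {α β : Type*} (X : Interface α) (Y : Interface β) :
    Interface (α × β) where
  P r := ⋃ (x : Set α) (y : Set β) (_ : x ×ˢ y ⊆ r), X.P x ×ˢ Y.P y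
  mono := by
    intro r s hrs p hp
    simp only [Set.mem_iUnion] at hp ⊢
    obtain ⟨x, y, hxy, hpx⟩ := hp
    exact ⟨x, y, hxy.trans hrs, hpx⟩

/-- The par of two interfaces: `X ⅋ Y = (X⊥ ⊗ Y⊥)⊥`. -/
def Interface.par {α β : Type*} (X : Interface α) (Y : Interface β) :
    Interface (α × β) :=
  (X.dual.tensor Y.dual).dual

/-- The linear arrow: `X ⊸ Y = X⊥ ⅋ Y`. -/
def Interface.lolli {α β : Type*} (X : Interface α) (Y : Interface β) :
    Interface (α × β) :=
  X.dual.par Y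

/-- The with of two interfaces, on the disjoint sum of the state spaces. -/
def Interface.wth {α β : Type*} (X : Interface α) (Y : Interface β) :
    Interface (α ⊕ β) where
  P z := Sum.inl '' X.P (Sum.inl ⁻¹' z) ∪ Sum.inr '' Y.P (Sum.inr ⁻¹' z)
  mono := by
    intro z w hzw
    exact Set.union_subset_union
      (Set.image_mono (X.mono (Set.preimage_mono hzw)))
      (Set.image_mono (Y.mono (Set.preimage_mono hzw)))

/-- `⋆ᵢ xᵢ` for a multiset of sets: the multisets obtained by picking one element
in each set (up to a bijective pairing). -/
def mstar {α : Type*} (S : Multiset (Set α)) : Set (Multiset α) :=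
  {m | Multiset.Rel (fun a x => a ∈ x) m S}

/-- The exponential `!X`: `[a₁,…,aₙ] ∈ !P(U)` iff there are sets `x₁,…,xₙ` with
`⋆ᵢ xᵢ ⊆ U` and `aᵢ ∈ P xᵢ` for all `i`. -/
def Interface.bang {α : Type*} (X : Interface α) : Interface (Multiset α) where
  P U := {m | ∃ S : Multiset (Set α),
    mstar S ⊆ U ∧ Multiset.Rel (fun a x => a ∈ X.P x) m S}
  mono := by
    intro U V hUV m hm
    obtain ⟨S, hS, hrel⟩ := hm
    exact ⟨S, hS.trans hUV, hrel⟩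

/-- `(a,b) ∈ (P_A ⊸ P_B)(r)` iff for every `x`, `a ∈ P_A x`
implies `b ∈ P_B (⟨r⟩ x)`. -/
theorem mem_lolli_iff {α β : Type*} (A : Interface α) (B : Interface β)
    (r : Set (α × β)) (a : α) (b : β) :
    (a, b) ∈ (A.lolli B).P r ↔ ∀ x : Set α, a ∈ A.P x → b ∈ B.P (dimage r x) := by
  simp only [Interface.lolli, Interface.par, Interface.dual, Interface.tensor,
    Set.mem_compl_iff, Set.mem_iUnion, Set.mem_prod, compl_compl]
  constructor
  · intro h x hax
    by_contra hb
    exact h ⟨x, (dimage r x)ᶜ, fun p hp hpr => hp.2 ⟨p.1, hp.1, by simpa using hpr⟩,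
      hax, by simpa using hb⟩
  · rintro h ⟨x, y, hxy, hax, hby⟩
    refine hby (B.mono (fun b' hb' => ?_) (h x hax))
    rintro hb'y
    obtain ⟨a', ha', hr⟩ := hb'
    exact hxy ⟨ha', hb'y⟩ hr
end

section
/- For any interface X, the identity relation Id_{|X|} = {(a,a) | a ∈ |X|} is a seed of the interface X ⊸ X. -/
/-- the identity relation is a seed of `X ⊸ X`. -/
theorem identity_seed_lolli {α : Type*} (X : Interface α) :
    Seed (X.lolli X) {p : α × α | p.1 = p.2} := by
  rintro ⟨a, b⟩ hab
  simp only [Set.mem_setOf_eq] at hab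
  subst hab
  simp only [Interface.lolli, Interface.par, Interface.dual, Interface.tensor,
    Set.mem_compl_iff, Set.mem_iUnion, not_exists]
  intro x y hxy hmem
  simp only [Set.mem_prod, Set.mem_compl_iff, compl_compl] at hmem
  obtain ⟨h1, h2⟩ := hmem
  apply h2
  apply X.mono (show x ⊆ yᶜ by
    intro c hc hcy
    have := hxy (Set.mk_mem_prod hc hcy)
    simp at this) h1
end

section
/- Let A and B be interfaces. If x is a seed of A and y is a seed of B, then the rectangle x × y is a seed of A ⅋ B. -/
/-- a rectangle of seeds is a seed of the par. -/
theorem seed_par_of_seeds {α β : Type*} (A : Interface α) (B : Interface β)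
    (x : Set α) (y : Set β) (hx : Seed A x) (hy : Seed B y) :
    Seed (A.par B) (x ×ˢ y) := by
  intro p hp
  obtain ⟨ha, hb⟩ := hp
  intro hmem
  simp only [Interface.par, Interface.dual, Interface.tensor, Set.mem_iUnion,
    Set.mem_prod, Set.mem_compl_iff] at hmem
  obtain ⟨u, v, huv, hu, hv⟩ := hmem
  by_cases h : ∃ a ∈ u, a ∈ x
  · obtain ⟨a', ha'u, ha'x⟩ := h
    have hvy : v ⊆ yᶜ := fun b' hb' hb'y =>
      huv (Set.mk_mem_prod ha'u hb') ⟨ha'x, hb'y⟩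
    exact hv (B.mono (Set.subset_compl_comm.mp hvy) (hy hb))
  · push_neg at h
    exact hu (A.mono (Set.subset_compl_comm.mp h) (hx ha))
end

section
/- Let X, X', Y, Y' be interfaces. If r is a seed of X ⊸ X' and s is a seed of Y ⊸ Y', then the relation r ⊗ s = {((a,b),(a',b')) | (a,a') ∈ r and (b,b') ∈ s} is a seed of (X ⊗ Y) ⊸ (X' ⊗ Y'). (Bifunctoriality of the tensor product; this is the essential content of the soundness of the tensor rule.) -/
lemma seed_lolli_iff {α β : Type*} (X : Interface α) (Y : Interface β)
    (r : Set (α × β)) :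
    Seed (X.lolli Y) r ↔ ∀ p ∈ r, ∀ (x : Set α) (y : Set β),
      x ×ˢ y ⊆ rᶜ → p.1 ∈ X.P x → p.2 ∈ Y.P yᶜ := by
  simp only [Seed, Interface.lolli, Interface.par, Interface.dual, Interface.tensor,
    Set.subset_def, Set.mem_compl_iff, Set.mem_iUnion, compl_compl]
  constructor
  · intro h p hp x y hxy hpx
    by_contra hpy
    exact h p hp ⟨x, y, hxy, by simp [Set.mem_prod, compl_compl]; exact ⟨hpx, hpy⟩⟩
  · intro h p hp ⟨x, y, hxy, hm⟩
    simp only [Set.mem_prod, compl_compl, Set.mem_compl_iff] at hm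
    exact hm.2 (h p hp x y hxy hm.1)

lemma key_seed_lolli {α β : Type*} (X : Interface α) (Y : Interface β) (r : Set (α × β))
    (hr : Seed (X.lolli Y) r) {x : Set α} {a : α} {b : β}
    (hab : (a, b) ∈ r) (ha : a ∈ X.P x) : b ∈ Y.P (dimage r x) := by
  have h := (seed_lolli_iff X Y r).mp hr (a, b) hab x (dimage r x)ᶜ ?_ ha
  · simpa using h
  · rintro ⟨c, d⟩ ⟨hc, hd⟩ hcd
    exact hd ⟨c, hc, hcd⟩

/-- bifunctoriality of the tensor product: the tensor of two linear
arrows is a linear arrow between the tensors. -/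
theorem tensor_of_seeds_lolli {α α' β β' : Type*}
    (X : Interface α) (X' : Interface α') (Y : Interface β) (Y' : Interface β')
    (r : Set (α × α')) (s : Set (β × β'))
    (hr : Seed (X.lolli X') r) (hs : Seed (Y.lolli Y') s) :
    Seed ((X.tensor Y).lolli (X'.tensor Y'))
      {q : (α × β) × (α' × β') | (q.1.1, q.2.1) ∈ r ∧ (q.1.2, q.2.2) ∈ s} := by
  rw [seed_lolli_iff]
  rintro ⟨⟨a, b⟩, ⟨a', b'⟩⟩ ⟨har, hbs⟩ u v huv hp
  simp only [Interface.tensor, Set.mem_iUnion] at hp ⊢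
  obtain ⟨x, y, hxy, hab⟩ := hp
  refine ⟨dimage r x, dimage s y, ?_, ?_, ?_⟩
  · rintro ⟨c', d'⟩ ⟨⟨c, hcx, hcr⟩, ⟨d, hdy, hds⟩⟩ hv
    exact huv (Set.mk_mem_prod (hxy (Set.mk_mem_prod hcx hdy)) hv) ⟨hcr, hds⟩
  · exact key_seed_lolli X X' r hr har hab.1
  · exact key_seed_lolli Y Y' s hs hbs hab.2
end

section
/- Let X, Y, Z be interfaces. If r is a seed of X ⊸ Y and r' is a seed of Y ⊸ Z, then the relational composition r'·r = {(a,c) | ∃ b, (a,b) ∈ r and (b,c) ∈ r'} is a seed of X ⊸ Z. (Soundness of the cut rule; this makes interfaces and linear arrows into a category.) -/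
lemma mem_lolli_P {α β : Type*} (X : Interface α) (Y : Interface β)
    (r : Set (α × β)) (p : α × β) :
    p ∈ (X.lolli Y).P r ↔
      ∀ x y, x ×ˢ y ⊆ rᶜ → p.1 ∈ X.P x → p.2 ∈ Y.P yᶜ := by
  simp only [Interface.lolli, Interface.par, Interface.dual, Interface.tensor,
    Set.mem_compl_iff, Set.mem_iUnion, not_exists, compl_compl,
    Set.mem_prod, not_and, not_not, Set.mem_setOf_eq]

/-- soundness of cut: relational composition of linear arrows is a
linear arrow. -/
theorem comp_seed_lolli {α β γ : Type*}
    (X : Interface α) (Y : Interface β) (Z : Interface γ)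
    (r : Set (α × β)) (r' : Set (β × γ))
    (hr : Seed (X.lolli Y) r) (hr' : Seed (Y.lolli Z) r') :
    Seed (X.lolli Z) {p : α × γ | ∃ b, (p.1, b) ∈ r ∧ (b, p.2) ∈ r'} := by
  intro p hp
  obtain ⟨b, hab, hbc⟩ := hp
  rw [mem_lolli_P]
  intro x z hxz ha
  set y : Set β := {b' | ∀ c ∈ z, (b', c) ∉ r'} with hy
  have hxy : x ×ˢ yᶜ ⊆ rᶜ := by
    rintro ⟨a', b'⟩ ⟨ha', hb'⟩ hab'
    simp only [hy, Set.mem_compl_iff, Set.mem_setOf_eq, not_forall, not_not] at hb'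
    obtain ⟨c', hc', hbc'⟩ := hb'
    exact hxz (show (a', c') ∈ x ×ˢ z from ⟨ha', hc'⟩) ⟨b', hab', hbc'⟩
  have hb : b ∈ Y.P y := by
    have := (mem_lolli_P X Y r (p.1, b)).mp (hr hab) x yᶜ hxy ha
    rwa [compl_compl] at this
  have hyz : y ×ˢ z ⊆ r'ᶜ := by
    rintro ⟨b', c'⟩ ⟨hb', hc'⟩ h
    exact hb' c' hc' h
  exact (mem_lolli_P Y Z r' (b, p.2)).mp (hr' hbc) y z hyz hb
end

section
/- Let X and Y be interfaces and r ⊆ |X| × |Y|. Then r is a seed of X ⊸ Y if and only if for every x ⊆ |X|, ⟨r⟩(P_X(x)) ⊆ P_Y(⟨r⟩(x)), where ⟨r⟩ is the direct image along r. (Linear arrows coincide with forward simulations.) -/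
/-- `r` is a seed of `X ⊸ Y` iff `⟨r⟩` is a forward simulation:
`⟨r⟩ (P_X x) ⊆ P_Y (⟨r⟩ x)` for all `x`. -/
theorem seed_lolli_iff_simulation {α β : Type*} (X : Interface α) (Y : Interface β)
    (r : Set (α × β)) :
    Seed (X.lolli Y) r ↔ ∀ x : Set α, dimage r (X.P x) ⊆ Y.P (dimage r x) := by
  constructor
  · intro h x b hb
    obtain ⟨a, ha, hab⟩ := hb
    have key := h hab
    simp only [Interface.lolli, Interface.par, Interface.dual, Interface.tensor,
      Set.mem_compl_iff, Set.mem_iUnion, not_exists] at key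
    by_contra hnb
    apply key x (dimage r x)ᶜ
    · intro p hp
      simp only [Set.mem_prod] at hp
      intro hpr
      exact hp.2 ⟨p.1, hp.1, by simpa using hpr⟩
    · constructor
      · simpa using ha
      · simpa using hnb
  · intro h p hp
    simp only [Interface.lolli, Interface.par, Interface.dual, Interface.tensor,
      Set.mem_compl_iff, Set.mem_iUnion, not_exists]
    intro x y hxy hmem
    simp only [Set.mem_prod, Set.mem_compl_iff, compl_compl] at hmem
    obtain ⟨ha, hb⟩ := hmem
    have : p.2 ∈ Y.P (dimage r x) := h x ⟨p.1, by simpa using ha, hp⟩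
    have hsub : dimage r x ⊆ yᶜ := by
      intro b ⟨a, hax, habr⟩ hby
      exact hxy (Set.mk_mem_prod hax hby) habr
    exact hb (Y.mono hsub this)
end

section
/- Let A and B be interfaces. A relation r ⊆ |A| × |B| is a seed of A ⊸ B if and only if the converse relation r^∼ = {(b,a) | (a,b) ∈ r} is a seed of B⊥ ⊸ A⊥. (The dual is an involutive contravariant functor whose action on morphisms is relational converse.) -/
/-- `r` is a seed of `A ⊸ B` iff its converse is a seed of
`B⊥ ⊸ A⊥` (contravariance of the dual). -/
theorem seed_lolli_iff_converse_seed_dual {α β : Type*}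
    (A : Interface α) (B : Interface β) (r : Set (α × β)) :
    Seed (A.lolli B) r ↔
      Seed (B.dual.lolli A.dual) {p : β × α | (p.2, p.1) ∈ r} := by
  simp only [Seed, Interface.lolli, Interface.par, Interface.dual, Interface.tensor,
    Set.subset_def, Set.mem_compl_iff, Set.mem_iUnion, compl_compl, not_exists,
    Set.mem_prod, Set.mem_setOf_eq, Prod.forall, not_and]
  constructor
  · intro h b a hab y x hsub hb ha
    exact h a b hab x y (fun p q hp => hsub q p ⟨hp.2, hp.1⟩) ha hb
  · intro h a b hab x y hsub ha hb
    exact h b a hab y x (fun p q hp => hsub q p ⟨hp.2, hp.1⟩) hb ha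
end

section
/- Let X and Y be interfaces and let r be a seed of X ⊸ Y. Then the direct image ⟨r⟩ maps seeds of X to seeds of Y, and it commutes with arbitrary unions; hence ⟨r⟩ is a sup-lattice morphism from Sd(X) to Sd(Y). -/
/-- a linear arrow maps seeds to seeds and its direct image commutes
with arbitrary unions: `⟨r⟩` is a sup-lattice morphism from `Sd(X)` to `Sd(Y)`. -/
theorem dimage_sup_lattice_morphism {α β : Type*} (X : Interface α) (Y : Interface β)
    (r : Set (α × β)) (hr : Seed (X.lolli Y) r) :
    (∀ x : Set α, Seed X x → Seed Y (dimage r x)) ∧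
    (∀ S : Set (Set α), dimage r (⋃₀ S) = ⋃ x ∈ S, dimage r x) := by
  constructor
  · intro x hx b hb
    obtain ⟨a, ha, hab⟩ := hb
    have h := hr hab
    simp only [Interface.lolli, Interface.par, Interface.dual, Interface.tensor,
      Set.mem_compl_iff, Set.mem_iUnion, not_exists] at h
    have key := h x (dimage r x)ᶜ
    by_contra hbP
    apply key
    · intro p hp
      simp only [Set.mem_prod] at hp
      intro hpr
      exact hp.2 ⟨p.1, hp.1, by simpa using hpr⟩
    · constructor
      · simpa using hx ha
      · simpa using hbP
  · intro S
    ext b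
    simp only [dimage, Set.mem_setOf_eq, Set.mem_sUnion, Set.mem_iUnion]
    constructor
    · rintro ⟨a, ⟨x, hxS, hax⟩, hab⟩
      exact ⟨x, hxS, a, hax, hab⟩
    · rintro ⟨x, hxS, a, hax, hab⟩
      exact ⟨a, ⟨x, hxS, hax⟩, hab⟩
end

section
/- Let X and Y be interfaces and let r be a seed of X ⊸ Y. Then the direct image along the converse relation, ⟨r^∼⟩, maps seeds of Y⊥ (antiseeds of Y) to seeds of X⊥ (antiseeds of X). -/
/-- the direct image along the converse of a linear arrow maps
antiseeds of `Y` to antiseeds of `X`. -/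
theorem converse_dimage_antiseeds {α β : Type*} (X : Interface α) (Y : Interface β)
    (r : Set (α × β)) (hr : Seed (X.lolli Y) r) :
    ∀ y : Set β, Seed Y.dual y →
      Seed X.dual (dimage {p : β × α | (p.2, p.1) ∈ r} y) := by
  intro y hy a ha haP
  obtain ⟨b, hby, hab⟩ := ha
  have hr' := hr hab
  apply hr'
  simp only [Interface.lolli, Interface.par, Interface.tensor, Interface.dual,
    Set.mem_iUnion, compl_compl] at haP hr' ⊢
  refine ⟨(dimage {p : β × α | (p.2, p.1) ∈ r} y)ᶜ, y, ?_, ?_, hy hby⟩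
  · rintro ⟨a', b'⟩ ⟨ha', hb'⟩ hab'
    exact ha' ⟨b', hb', hab'⟩
  · simpa [compl_compl] using haP
end

section
/- Let A be an interface, U ⊆ Mulf(|A|), and l, l' finite multisets over |A|. Then l + l' ∈ !P_A(U) if and only if there exist V, V' ⊆ Mulf(|A|) with V ⋆ V' ⊆ U such that l ∈ !P_A(V) and l' ∈ !P_A(V'), where V ⋆ V' = {v + v' | v ∈ V, v' ∈ V'}. -/
/-- `l + l' ∈ !P_A(U)` iff there are `V, V'` with `V ⋆ V' ⊆ U`,
`l ∈ !P_A(V)` and `l' ∈ !P_A(V')`. -/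
theorem add_mem_bang_iff {α : Type*} (A : Interface α)
    (U : Set (Multiset α)) (l l' : Multiset α) :
    l + l' ∈ A.bang.P U ↔
      ∃ V V' : Set (Multiset α),
        {w : Multiset α | ∃ v ∈ V, ∃ v' ∈ V', w = v + v'} ⊆ U ∧
        l ∈ A.bang.P V ∧ l' ∈ A.bang.P V' := by
  constructor
  · rintro ⟨S, hS, hrel⟩
    obtain ⟨S₁, S₂, h1, h2, rfl⟩ := Multiset.rel_add_left.mp hrel
    refine ⟨mstar S₁, mstar S₂, ?_, ⟨S₁, subset_rfl, h1⟩, ⟨S₂, subset_rfl, h2⟩⟩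
    rintro w ⟨v, hv, v', hv', rfl⟩
    exact hS (Multiset.Rel.add hv hv')
  · rintro ⟨V, V', hVV, ⟨S, hS, h1⟩, ⟨S', hS', h2⟩⟩
    refine ⟨S + S', ?_, Multiset.Rel.add h1 h2⟩
    intro m hm
    obtain ⟨m₁, m₂, hm1, hm2, rfl⟩ := Multiset.rel_add_right.mp hm
    exact hVV ⟨m₁, hS hm1, m₂, hS' hm2, rfl⟩
end

section
/- For all interfaces X and Y, !(X & Y) = !X ⊗ !Y: under the canonical bijection Mulf(|X| + |Y|) ≅ Mulf(|X|) × Mulf(|Y|) (splitting a multiset over a disjoint sum into its two components), the predicate transformer !(P_X & P_Y) is identified with P_{!X} ⊗ P_{!Y}. Explicitly, for R ⊆ Mulf(|X|) × Mulf(|Y|) and multisets l_X over |X| and l_Y over |Y|, the pair (l_X, l_Y) (viewed as a multiset over |X|+|Y|) lies in !(P_X & P_Y)(R) if and only if (l_X, l_Y) ∈ (!P_X ⊗ !P_Y)(R). -/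
/-- The canonical injection `Mulf(|X|) × Mulf(|Y|) → Mulf(|X| + |Y|)` (the inverse
of the canonical bijection splitting a multiset over a disjoint sum). -/
def glue {α β : Type*} (p : Multiset α × Multiset β) : Multiset (α ⊕ β) :=
  p.1.map Sum.inl + p.2.map Sum.inr

lemma glue_injective {α β : Type*} : Function.Injective (glue (α := α) (β := β)) := by
  rintro ⟨m1, n1⟩ ⟨m2, n2⟩ h
  classical
  simp only [glue] at h
  have hl : Multiset.filter (Sum.isLeft · = true) (m1.map Sum.inl + n1.map Sum.inr) =
      Multiset.filter (Sum.isLeft · = true) (m2.map Sum.inl + n2.map Sum.inr) := by rw [h]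
  have hr : Multiset.filter (Sum.isRight · = true) (m1.map Sum.inl + n1.map Sum.inr) =
      Multiset.filter (Sum.isRight · = true) (m2.map Sum.inl + n2.map Sum.inr) := by rw [h]
  have fl : ∀ (m : Multiset α) (n : Multiset β),
      Multiset.filter (Sum.isLeft · = true) (m.map Sum.inl + n.map Sum.inr) = m.map Sum.inl := by
    intro m n
    rw [Multiset.filter_add,
      Multiset.filter_eq_self.mpr (by rintro a ha; obtain ⟨b, _, rfl⟩ := Multiset.mem_map.mp ha; rfl),
      Multiset.filter_eq_nil.mpr (by rintro a ha; obtain ⟨b, _, rfl⟩ := Multiset.mem_map.mp ha; simp),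
      add_zero]
  have fr : ∀ (m : Multiset α) (n : Multiset β),
      Multiset.filter (Sum.isRight · = true) (m.map Sum.inl + n.map Sum.inr) = n.map Sum.inr := by
    intro m n
    rw [Multiset.filter_add,
      Multiset.filter_eq_nil.mpr (by rintro a ha; obtain ⟨b, _, rfl⟩ := Multiset.mem_map.mp ha; simp),
      Multiset.filter_eq_self.mpr (by rintro a ha; obtain ⟨b, _, rfl⟩ := Multiset.mem_map.mp ha; rfl),
      zero_add]
  rw [fl, fl] at hl
  rw [fr, fr] at hr
  exact Prod.ext (Multiset.map_injective Sum.inl_injective hl)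
    (Multiset.map_injective Sum.inr_injective hr)

lemma extract_inl {α β : Type*} {m : Multiset (α ⊕ β)} {S : Multiset (Set α)}
    (h : Multiset.Rel (fun a x => a ∈ Sum.inl '' x) m S) :
    ∃ mX : Multiset α, m = mX.map Sum.inl ∧ Multiset.Rel (fun a x => a ∈ x) mX S := by
  induction h with
  | zero => exact ⟨0, rfl, Multiset.Rel.zero⟩
  | @cons a x m S ha _ ih =>
    obtain ⟨a', ha', rfl⟩ := ha
    obtain ⟨mX, rfl, hrel⟩ := ih
    exact ⟨a' ::ₘ mX, by simp, Multiset.Rel.cons ha' hrel⟩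

lemma extract_inr {α β : Type*} {m : Multiset (α ⊕ β)} {S : Multiset (Set β)}
    (h : Multiset.Rel (fun a x => a ∈ Sum.inr '' x) m S) :
    ∃ mY : Multiset β, m = mY.map Sum.inr ∧ Multiset.Rel (fun a x => a ∈ x) mY S := by
  induction h with
  | zero => exact ⟨0, rfl, Multiset.Rel.zero⟩
  | @cons a x m S ha _ ih =>
    obtain ⟨a', ha', rfl⟩ := ha
    obtain ⟨mY, rfl, hrel⟩ := ih
    exact ⟨a' ::ₘ mY, by simp, Multiset.Rel.cons ha' hrel⟩

/-- `!(X & Y) = !X ⊗ !Y` under the canonical identification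
`Mulf(|X| + |Y|) ≅ Mulf(|X|) × Mulf(|Y|)`. -/
theorem bang_with_eq_tensor_bang {α β : Type*} (X : Interface α) (Y : Interface β)
    (R : Set (Multiset α × Multiset β)) (lX : Multiset α) (lY : Multiset β) :
    glue (lX, lY) ∈ (X.wth Y).bang.P (glue '' R) ↔
      (lX, lY) ∈ ((X.bang).tensor (Y.bang)).P R := by
  constructor
  · rintro ⟨S, hS, hrel⟩
    rw [glue] at hrel
    rw [Multiset.rel_add_left] at hrel
    obtain ⟨SX, SY, hrelX, hrelY, rfl⟩ := hrel
    rw [Multiset.rel_map_left] at hrelX hrelY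
    have hX : Multiset.Rel (fun a x => a ∈ X.P x) lX (SX.map (Sum.inl ⁻¹' ·)) := by
      rw [Multiset.rel_map_right]
      refine hrelX.mono fun a _ z _ h => ?_
      simp only [Interface.wth, Set.mem_setOf_eq, Set.mem_union, Set.mem_image] at h
      rcases h with ⟨a', ha', he⟩ | ⟨b', _, he⟩
      · exact Sum.inl_injective he ▸ ha'
      · exact absurd he (by simp)
    have hY : Multiset.Rel (fun a x => a ∈ Y.P x) lY (SY.map (Sum.inr ⁻¹' ·)) := by
      rw [Multiset.rel_map_right]
      refine hrelY.mono fun a _ z _ h => ?_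
      simp only [Interface.wth, Set.mem_setOf_eq, Set.mem_union, Set.mem_image] at h
      rcases h with ⟨a', _, he⟩ | ⟨b', hb', he⟩
      · exact absurd he (by simp)
      · exact Sum.inr_injective he ▸ hb'
    simp only [Interface.tensor, Set.mem_iUnion]
    refine ⟨mstar (SX.map (Sum.inl ⁻¹' ·)), mstar (SY.map (Sum.inr ⁻¹' ·)), ?_, ?_⟩
    · rintro ⟨m, n⟩ ⟨hm, hn⟩
      rw [mstar, Set.mem_setOf_eq, Multiset.rel_map_right] at hm hn
      have hglue : glue (m, n) ∈ mstar (SX + SY) := by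
        rw [mstar, Set.mem_setOf_eq, glue, Multiset.rel_add_left]
        refine ⟨SX, SY, ?_, ?_, rfl⟩
        · rw [Multiset.rel_map_left]; exact hm.mono fun a _ z _ h => h
        · rw [Multiset.rel_map_left]; exact hn.mono fun a _ z _ h => h
      obtain ⟨p, hp, hpe⟩ := hS hglue
      exact glue_injective hpe ▸ hp
    · exact ⟨⟨SX.map (Sum.inl ⁻¹' ·), subset_refl _, hX⟩,
        ⟨SY.map (Sum.inr ⁻¹' ·), subset_refl _, hY⟩⟩
  · intro h
    simp only [Interface.tensor, Set.mem_iUnion] at h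
    obtain ⟨x, y, hxy, ⟨SX, hSX, hrelX⟩, ⟨SY, hSY, hrelY⟩⟩ := h
    refine ⟨SX.map (Sum.inl '' ·) + SY.map (Sum.inr '' ·), ?_, ?_⟩
    · intro m hm
      rw [mstar, Set.mem_setOf_eq, Multiset.rel_add_right] at hm
      obtain ⟨m1, m2, hm1, hm2, rfl⟩ := hm
      rw [Multiset.rel_map_right] at hm1 hm2
      obtain ⟨mX, rfl, hmX⟩ := extract_inl hm1
      obtain ⟨mY, rfl, hmY⟩ := extract_inr hm2
      exact ⟨(mX, mY), hxy ⟨hSX hmX, hSY hmY⟩, rfl⟩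
    · rw [glue, Multiset.rel_add_left]
      refine ⟨SX.map (Sum.inl '' ·), SY.map (Sum.inr '' ·), ?_, ?_, rfl⟩
      · rw [Multiset.rel_map_left, Multiset.rel_map_right]
        refine hrelX.mono fun a _ x0 _ h => ?_
        simp only [Interface.wth, Set.mem_setOf_eq, Set.mem_union]
        exact Or.inl ⟨a, by rwa [Set.preimage_image_eq _ Sum.inl_injective], rfl⟩
      · rw [Multiset.rel_map_left, Multiset.rel_map_right]
        refine hrelY.mono fun a _ y0 _ h => ?_
        simp only [Interface.wth, Set.mem_setOf_eq, Set.mem_union]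
        exact Or.inr ⟨a, by rwa [Set.preimage_image_eq _ Sum.inr_injective], rfl⟩
end

section
/- If the predicate transformer of an interface X is the identity on Set(|X|), then the predicate transformer of !X is the identity on Set(Mulf(|X|)): for every U ⊆ Mulf(|X|), !Id(U) = U. (This is the exponential case of the proposition that every interface interpreting a closed linear formula has identity predicate transformer.) -/
/-- if the predicate transformer of `X` is the identity, then so is
that of `!X`. -/
theorem bang_id {α : Type*} (X : Interface α) (h : ∀ x : Set α, X.P x = x) :
    ∀ U : Set (Multiset α), X.bang.P U = U := by
  intro U
  ext m
  constructor
  · rintro ⟨S, hS, hrel⟩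
    apply hS
    simpa [mstar, h] using hrel
  · intro hm
    refine ⟨m.map (fun a => {a}), ?_, ?_⟩
    · intro m' hm'
      have : m' = m := by
        have := (Multiset.rel_map_right (r := fun a x => a ∈ x)).mp hm'
        have := Multiset.rel_eq.mp (this.mono (fun a _ b _ hab => by simpa using hab))
        exact this
      simpa [this] using hm
    · rw [Multiset.rel_map_right]
      exact Multiset.rel_eq.mpr rfl |>.mono (fun a _ b _ hab => by simp [h, hab])
end

section
/- Let X be the 'switch' interface with state space {−, +} and predicate transformer P given by P(∅) = ∅, P({−,+}) = {−,+}, P({+}) = {−}, and P({−}) = {+}. Then: (i) P⊥ = P; (ii) P ∘ P is the identity on Set({−,+}); (iii) the seeds of X are exactly ∅ and {−,+}; (iv) the relation {(+,−), (−,+)} is a seed of X ⊗ X. In particular, a seed of a tensor product need not contain a product of seeds. -/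

lemma bool_set_cases (x : Set Bool) :
    x = ∅ ∨ x = {true} ∨ x = {false} ∨ x = Set.univ := by
  by_cases ht : true ∈ x <;> by_cases hf : false ∈ x
  · right; right; right; ext b; cases b <;> simp [ht, hf]
  · right; left; ext b; cases b <;> simp [ht, hf]
  · right; right; left; ext b; cases b <;> simp [ht, hf]
  · left; ext b; cases b <;> simp [ht, hf]

/-- properties of the "switch" interface on `{−,+}` (coded as
`Bool`, with `+` as `true` and `−` as `false`): it is self-dual, an involution,
its only seeds are `∅` and the whole space, and `{(+,−),(−,+)}` is a seed of
`X ⊗ X`. -/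
theorem switch_interface (X : Interface Bool)
    (h0 : X.P ∅ = ∅) (h1 : X.P Set.univ = Set.univ)
    (hp : X.P {true} = {false}) (hm : X.P {false} = {true}) :
    (∀ x : Set Bool, X.dual.P x = X.P x) ∧
    (∀ x : Set Bool, X.P (X.P x) = x) ∧
    (∀ x : Set Bool, Seed X x ↔ x = ∅ ∨ x = Set.univ) ∧
    Seed (X.tensor X) ({(true, false), (false, true)} : Set (Bool × Bool)) := by
  have huniv : (Set.univ : Set Bool) = {false, true} := by
    ext b; cases b <;> simp
  have h1' : X.P {false, true} = {false, true} := by rw [← huniv, h1]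
  have hc0 : (∅ : Set Bool)ᶜ = {false, true} := by rw [Set.compl_empty, huniv]
  have hcu : ({false, true} : Set Bool)ᶜ = ∅ := by rw [← huniv, Set.compl_univ]
  have hct : ({true} : Set Bool)ᶜ = {false} := by
    ext b; cases b <;> simp
  have hcf : ({false} : Set Bool)ᶜ = {true} := by
    ext b; cases b <;> simp
  refine ⟨?_, ?_, ?_, ?_⟩
  · intro x
    rcases bool_set_cases x with h | h | h | h <;> subst h <;>
      simp [Interface.dual, huniv, hc0, hcu, hct, hcf, h0, h1', hp, hm]
  · intro x
    rcases bool_set_cases x with h | h | h | h <;> subst h <;>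
      simp [huniv, h0, h1', hp, hm]
  · intro x
    rcases bool_set_cases x with h | h | h | h <;> subst h
    · simp [Seed, h0]
    · constructor
      · intro hs
        rw [Seed, hp] at hs
        exact absurd (hs rfl) (by simp)
      · rintro (h | h) <;> exact absurd h (by simp [huniv, Set.ext_iff])
    · constructor
      · intro hs
        rw [Seed, hm] at hs
        exact absurd (hs rfl) (by simp)
      · rintro (h | h) <;> exact absurd h (by simp [huniv, Set.ext_iff])
    · rw [Seed, h1]; simp
  · intro p hp'
    simp only [Set.mem_insert_iff, Set.mem_singleton_iff] at hp'
    simp only [Interface.tensor, Set.mem_iUnion]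
    rcases hp' with h | h
    · refine ⟨{false}, {true}, ?_, ?_⟩
      · intro q hq
        simp only [Set.mem_prod, Set.mem_singleton_iff] at hq
        simp [Prod.ext_iff, hq.1, hq.2]
      · simp [h, hp, hm]
    · refine ⟨{true}, {false}, ?_, ?_⟩
      · intro q hq
        simp only [Set.mem_prod, Set.mem_singleton_iff] at hq
        simp [Prod.ext_iff, hq.1, hq.2]
      · simp [h, hp, hm]
end
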